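/- The set of ex-ante efficient lotteries coincides with the set of ex-post efficient lotteries if and only if there exists a utilitarian representation (u_i)_{i∈N} of the agents' preferences such that the welfare ∑_{i∈N} u_i(x) takes the same value for all Pareto optimal outcomes x ∈ X*. -/

import Mathlib

attribute [local instance] Classical.propDecidable

/-- The strict part of a preference relation. -/
def strictPref {X : Type*} (r : X → X → Prop) (x y : X) : Prop := r x y ∧ ¬ r y x

/-- A preference: a complete (total) and transitive binary relation. -/
def IsPrefOrder {X : Type*} (r : X → X → Prop) : Prop :=
  (∀ x y, r x y ∨ r y x) ∧ Transitive r

/-- A lottery over the finite set of outcomes `X`. -/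
def IsLottery {X : Type*} [Fintype X] (p : X → ℝ) : Prop :=
  (∀ x, 0 ≤ p x) ∧ ∑ x, p x = 1

/-- Total weight a lottery `p` places on outcomes strictly preferred to `x`. -/
noncomputable def upWeight {X : Type*} [Fintype X] (r : X → X → Prop) (p : X → ℝ) (x : X) : ℝ :=
  ∑ y ∈ Finset.univ.filter (fun y => strictPref r y x), p y

/-- First-order stochastic dominance (weak): `p ≿ q`. -/
def SDge {X : Type*} [Fintype X] (r : X → X → Prop) (p q : X → ℝ) : Prop :=
  ∀ x, upWeight r q x ≤ upWeight r p x

/-- First-order stochastic dominance (strict): `p ≻ q`. -/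
def SDgt {X : Type*} [Fintype X] (r : X → X → Prop) (p q : X → ℝ) : Prop :=
  SDge r p q ∧ ∃ x, upWeight r q x < upWeight r p x

/-- A lottery `p` is ex-ante efficient if no lottery weakly SD-dominates it for all agents
and strictly for some agent. -/
def ExAnteEff {X N : Type*} [Fintype X] (pref : N → X → X → Prop) (p : X → ℝ) : Prop :=
  ¬ ∃ q : X → ℝ, IsLottery q ∧ (∀ i, SDge (pref i) q p) ∧ ∃ j, SDgt (pref j) q p

/-- An outcome is Pareto optimal if no outcome is weakly better for all agents and
strictly better for some agent. -/
def ParetoOptimal {X N : Type*} (pref : N → X → X → Prop) (x : X) : Prop :=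
  ¬ ∃ y, (∀ i, pref i y x) ∧ ∃ j, strictPref (pref j) y x

/-- A lottery is ex-post efficient if it is supported on Pareto optimal outcomes. -/
def ExPostEff {X N : Type*} [Fintype X] (pref : N → X → X → Prop) (p : X → ℝ) : Prop :=
  ∀ x, 0 < p x → ParetoOptimal pref x

/-- `u` is a utility representation of the preference `r`. -/
def Represents {X : Type*} (u : X → ℝ) (r : X → X → Prop) : Prop :=
  ∀ x y, (u y ≤ u x ↔ r x y)



set_option linter.unusedSectionVars false
set_option maxHeartbeats 1000000

section Basics
variable {X : Type*} {r : X → X → Prop}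

lemma prefRefl (hr : IsPrefOrder r) (x : X) : r x x := (hr.1 x x).elim id id

lemma strictPref_iff_not (hr : IsPrefOrder r) {x y : X} : strictPref r y x ↔ ¬ r x y :=
  ⟨fun h => h.2, fun h => ⟨(hr.1 x y).resolve_left h, h⟩⟩

lemma rep_lt {u : X → ℝ} (hu : Represents u r) (hr : IsPrefOrder r) {x y : X} :
    strictPref r y x ↔ u x < u y := by
  rw [strictPref_iff_not hr, ← hu x y, not_le]

lemma rep_le {u : X → ℝ} (hu : Represents u r) {x y : X} (h : r y x) : u x ≤ u y :=
  (hu y x).mpr h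

/-- canonical representation -/
lemma exists_rep (hr : IsPrefOrder r) [Fintype X] : ∃ u : X → ℝ, Represents u r := by
  classical
  refine ⟨fun x => ((Finset.univ.filter (fun y => r x y)).card : ℝ), fun x y => ?_⟩
  constructor
  · intro h
    by_contra hxy
    have hsub : Finset.univ.filter (fun z => r x z) ⊂ Finset.univ.filter (fun z => r y z) := by
      constructor
      · intro z hz
        simp only [Finset.mem_filter, Finset.mem_univ, true_and] at hz ⊢
        exact hr.2 ((hr.1 x y).resolve_left hxy) hz
      · intro hcon
        have : y ∈ Finset.univ.filter (fun z => r y z) := by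
          simp [prefRefl hr y]
        have := hcon this
        simp only [Finset.mem_filter, Finset.mem_univ, true_and] at this
        exact hxy this
    have := Finset.card_lt_card hsub
    have : ((Finset.univ.filter (fun z => r x z)).card : ℝ)
        < ((Finset.univ.filter (fun z => r y z)).card : ℝ) := by exact_mod_cast this
    linarith
  · intro h
    have hsub : Finset.univ.filter (fun z => r y z) ⊆ Finset.univ.filter (fun z => r x z) := by
      intro z hz
      simp only [Finset.mem_filter, Finset.mem_univ, true_and] at hz ⊢
      exact hr.2 h hz
    simp only []
    exact_mod_cast Finset.card_le_card hsub

end Basics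

section Abel
variable {X : Type*} [Fintype X] [Nonempty X] (u : X → ℝ)

/-- Abel-summation weights for a utility function. -/
noncomputable def abelW (x : X) : ℝ :=
  if h : ((Finset.univ.image u).filter (fun t => u x < t)).Nonempty then
    (((Finset.univ.image u).filter (fun t => u x < t)).min' h - u x) /
      ((Finset.univ.filter (fun z => u z = u x)).card : ℝ)
  else 0

lemma abelW_nonneg (x : X) : 0 ≤ abelW u x := by
  unfold abelW
  split_ifs with h
  · have h1 : ((Finset.univ.image u).filter (fun t => u x < t)).min' h
        ∈ (Finset.univ.image u).filter (fun t => u x < t) := Finset.min'_mem _ h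
    rw [Finset.mem_filter] at h1
    have h2 : (0:ℝ) < ((Finset.univ.filter (fun z => u z = u x)).card : ℝ) := by
      have : x ∈ Finset.univ.filter (fun z => u z = u x) := by simp
      have := Finset.card_pos.mpr ⟨x, this⟩
      exact_mod_cast this
    exact div_nonneg (by linarith [h1.2]) (le_of_lt h2)
  · exact le_refl 0

lemma abelW_pos {x y : X} (hxy : u x < u y) : 0 < abelW u x := by
  unfold abelW
  have hne : ((Finset.univ.image u).filter (fun t => u x < t)).Nonempty :=
    ⟨u y, by simp [hxy]⟩
  rw [dif_pos hne]
  have h1 : ((Finset.univ.image u).filter (fun t => u x < t)).min' hne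
      ∈ (Finset.univ.image u).filter (fun t => u x < t) := Finset.min'_mem _ hne
  rw [Finset.mem_filter] at h1
  have h2 : (0:ℝ) < ((Finset.univ.filter (fun z => u z = u x)).card : ℝ) := by
    have : x ∈ Finset.univ.filter (fun z => u z = u x) := by simp
    exact_mod_cast Finset.card_pos.mpr ⟨x, this⟩
  exact div_pos (by linarith [h1.2]) h2

lemma abel_key : ∀ y : X, u y = (Finset.univ.inf' Finset.univ_nonempty u) +
    ∑ x ∈ Finset.univ.filter (fun x => u x < u y), abelW u x := by
  set m := Finset.univ.inf' Finset.univ_nonempty u with hm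
  set V := Finset.univ.image u with hV
  suffices H : ∀ n : ℕ, ∀ y : X, (V.filter (fun t => t < u y)).card ≤ n →
      u y = m + ∑ x ∈ Finset.univ.filter (fun x => u x < u y), abelW u x by
    intro y; exact H _ y le_rfl
  intro n
  induction n with
  | zero =>
    intro y hy
    have hVe : V.filter (fun t => t < u y) = ∅ := Finset.card_eq_zero.mp (Nat.le_zero.mp hy)
    have hmy : m = u y := by
      have h1 : m ≤ u y := Finset.inf'_le _ (Finset.mem_univ y)
      rcases lt_or_eq_of_le h1 with h2 | h2
      · exfalso
        have : m ∈ V.filter (fun t => t < u y) := by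
          rw [Finset.mem_filter]
          refine ⟨?_, h2⟩
          rw [hV, Finset.mem_image]
          obtain ⟨z, _, hz⟩ := Finset.exists_mem_eq_inf' Finset.univ_nonempty u
          exact ⟨z, Finset.mem_univ z, hz.symm⟩
        rw [hVe] at this; exact absurd this (Finset.notMem_empty m)
      · exact h2
    have hfe : Finset.univ.filter (fun x => u x < u y) = ∅ := by
      rw [Finset.eq_empty_iff_forall_notMem]
      intro x hx
      rw [Finset.mem_filter] at hx
      have : u x ∈ V.filter (fun t => t < u y) := by
        rw [Finset.mem_filter]; exact ⟨by simp [hV], hx.2⟩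
      rw [hVe] at this; exact absurd this (Finset.notMem_empty _)
    rw [hfe, Finset.sum_empty, add_zero, hmy]
  | succ n ih =>
    intro y hy
    rcases Nat.lt_or_ge n (V.filter (fun t => t < u y)).card with hcard | hcard
    swap
    · exact ih y hcard
    -- the set of values below u y is nonempty
    have hB : (V.filter (fun t => t < u y)).Nonempty := by
      rw [← Finset.card_pos]; omega
    set B := V.filter (fun t => t < u y) with hBdef
    set v := B.max' hB with hvdef
    have hvmem : v ∈ B := Finset.max'_mem _ _
    have hvV : v ∈ V ∧ v < u y := by
      have := hvmem; rw [hBdef, Finset.mem_filter] at this; exact this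
    obtain ⟨z, _, hz⟩ : ∃ z ∈ Finset.univ, u z = v := by
      have := hvV.1; rw [hV, Finset.mem_image] at this; exact this
    -- apply induction hypothesis to z
    have hsub : V.filter (fun t => t < u z) ⊆ B.erase v := by
      intro t ht
      rw [Finset.mem_filter] at ht
      rw [Finset.mem_erase]
      constructor
      · intro h; rw [h, hz] at ht; exact lt_irrefl v ht.2
      · rw [hBdef, Finset.mem_filter]
        exact ⟨ht.1, lt_trans (hz ▸ ht.2) hvV.2⟩
    have hcz : (V.filter (fun t => t < u z)).card ≤ n := by
      have h1 := Finset.card_le_card hsub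
      have h2 : (B.erase v).card = B.card - 1 := Finset.card_erase_of_mem hvmem
      omega
    have ihz := ih z hcz
    -- split the filter set
    have hsplit : Finset.univ.filter (fun x => u x < u y) =
        (Finset.univ.filter (fun x => u x < v)) ∪ (Finset.univ.filter (fun x => u x = v)) := by
      ext x
      simp only [Finset.mem_union, Finset.mem_filter, Finset.mem_univ, true_and]
      constructor
      · intro h
        have hxB : u x ∈ B := by rw [hBdef, Finset.mem_filter]; exact ⟨by simp [hV], h⟩
        rcases lt_or_eq_of_le (Finset.le_max' _ _ hxB) with h2 | h2
        · exact Or.inl h2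
        · exact Or.inr h2
      · rintro (h | h)
        · exact lt_trans h hvV.2
        · rw [h]; exact hvV.2
    have hdisj : Disjoint (Finset.univ.filter (fun x => u x < v))
        (Finset.univ.filter (fun x => u x = v)) := by
      rw [Finset.disjoint_filter]
      intro x _ h1 h2
      rw [h2] at h1; exact lt_irrefl v h1
    -- compute sum over the level set of v
    set K := (Finset.univ.filter (fun x' => u x' = v)).card with hK
    have hKpos : 0 < K := Finset.card_pos.mpr ⟨z, by simp [hz]⟩
    have hlevel : ∀ x ∈ Finset.univ.filter (fun x' => u x' = v),
        abelW u x = (u y - v) / (K : ℝ) := by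
      intro x hx
      rw [Finset.mem_filter] at hx
      have hxv : u x = v := hx.2
      have hne : (V.filter (fun t => u x < t)).Nonempty := ⟨u y, by
        rw [Finset.mem_filter]; exact ⟨by simp [hV], hxv ▸ hvV.2⟩⟩
      have hmin : (V.filter (fun t => u x < t)).min' hne = u y := by
        apply le_antisymm
        · apply Finset.min'_le
          rw [Finset.mem_filter]; exact ⟨by simp [hV], hxv ▸ hvV.2⟩
        · set t0 := (V.filter (fun t => u x < t)).min' hne with ht0
          have ht0mem := Finset.min'_mem (V.filter (fun t => u x < t)) hne
          rw [Finset.mem_filter] at ht0mem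
          by_contra hcon
          push_neg at hcon
          have ht0B : t0 ∈ B := by
            rw [hBdef, Finset.mem_filter]; exact ⟨ht0mem.1, hcon⟩
          have := Finset.le_max' B t0 ht0B
          rw [← hvdef] at this
          have h5 : u x < t0 := ht0 ▸ ht0mem.2
          linarith [hxv.le, hxv.ge]
      unfold abelW
      rw [dif_pos hne, hmin, hxv]
    have hsum2 : ∑ x ∈ Finset.univ.filter (fun x' => u x' = v), abelW u x = u y - v := by
      rw [Finset.sum_congr rfl hlevel, Finset.sum_const, ← hK, nsmul_eq_mul]
      field_simp
    have hsum1 : ∑ x ∈ Finset.univ.filter (fun x' => u x' < v), abelW u x = v - m := by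
      have := ihz
      rw [hz] at this
      linarith [this]
    rw [hsplit, Finset.sum_union hdisj, hsum1, hsum2]
    ring

end Abel

section Exp
variable {X : Type*} [Fintype X] [Nonempty X] {r : X → X → Prop} {u : X → ℝ}

lemma upWeight_nonneg (hp : ∀ y, 0 ≤ p y) (x : X) : 0 ≤ upWeight r p x :=
  Finset.sum_nonneg (fun y _ => hp y)

lemma upWeight_eq_filter_lt (hu : Represents u r) (hr : IsPrefOrder r) (p : X → ℝ) (x : X) :
    upWeight r p x = ∑ y ∈ Finset.univ.filter (fun y => u x < u y), p y := by
  unfold upWeight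
  congr 1
  apply Finset.filter_congr
  intro y _
  exact rep_lt hu hr

lemma exp_eq (hu : Represents u r) (hr : IsPrefOrder r) (p : X → ℝ) (hp1 : ∑ y, p y = 1) :
    ∑ y, p y * u y = (Finset.univ.inf' Finset.univ_nonempty u) +
      ∑ x, abelW u x * upWeight r p x := by
  set m := Finset.univ.inf' Finset.univ_nonempty u with hm
  have h1 : ∀ y : X, p y * u y = p y * m +
      ∑ x ∈ Finset.univ.filter (fun x => u x < u y), p y * abelW u x := by
    intro y
    rw [← Finset.mul_sum, ← mul_add, ← abel_key u y]
  rw [Finset.sum_congr rfl (fun y _ => h1 y), Finset.sum_add_distrib, ← Finset.sum_mul, hp1,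
    one_mul]
  congr 1
  have h2 : ∀ y : X, ∑ x ∈ Finset.univ.filter (fun x => u x < u y), p y * abelW u x
      = ∑ x : X, if u x < u y then p y * abelW u x else 0 := by
    intro y; rw [Finset.sum_filter]
  rw [Finset.sum_congr rfl (fun y _ => h2 y), Finset.sum_comm]
  apply Finset.sum_congr rfl
  intro x _
  rw [upWeight_eq_filter_lt hu hr, Finset.sum_filter, Finset.mul_sum]
  apply Finset.sum_congr rfl
  intro y _
  split_ifs with h
  · ring
  · ring

lemma exp_sub (hu : Represents u r) (hr : IsPrefOrder r) {p q : X → ℝ}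
    (hp1 : ∑ y, p y = 1) (hq1 : ∑ y, q y = 1) :
    ∑ y, q y * u y - ∑ y, p y * u y = ∑ x, abelW u x * (upWeight r q x - upWeight r p x) := by
  rw [exp_eq hu hr p hp1, exp_eq hu hr q hq1]
  rw [Finset.sum_congr rfl (fun (x:X) _ => mul_sub (abelW u x) (upWeight r q x) (upWeight r p x)),
    Finset.sum_sub_distrib]
  ring

lemma exp_le_of_SDge (hu : Represents u r) (hr : IsPrefOrder r) {p q : X → ℝ}
    (hp1 : ∑ y, p y = 1) (hq1 : ∑ y, q y = 1) (h : SDge r q p) :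
    ∑ y, p y * u y ≤ ∑ y, q y * u y := by
  have := exp_sub hu hr hp1 hq1
  have h2 : 0 ≤ ∑ x, abelW u x * (upWeight r q x - upWeight r p x) :=
    Finset.sum_nonneg (fun x _ => mul_nonneg (abelW_nonneg u x) (by linarith [h x]))
  linarith

lemma exp_lt_of_SDgt (hu : Represents u r) (hr : IsPrefOrder r) {p q : X → ℝ}
    (hp : IsLottery p) (hq : IsLottery q) (h : SDgt r q p) :
    ∑ y, p y * u y < ∑ y, q y * u y := by
  have heq := exp_sub hu hr hp.2 hq.2
  obtain ⟨hge, x0, hx0⟩ := h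
  have hpos : 0 < ∑ x, abelW u x * (upWeight r q x - upWeight r p x) := by
    apply Finset.sum_pos' (fun x _ => mul_nonneg (abelW_nonneg u x) (by linarith [hge x]))
    refine ⟨x0, Finset.mem_univ x0, ?_⟩
    have hq0 : 0 < upWeight r q x0 := lt_of_le_of_lt (upWeight_nonneg hp.1 x0) hx0
    have hne : (Finset.univ.filter (fun y => strictPref r y x0)).Nonempty := by
      by_contra hc
      rw [Finset.not_nonempty_iff_eq_empty] at hc
      unfold upWeight at hq0
      rw [hc, Finset.sum_empty] at hq0
      exact lt_irrefl 0 hq0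
    obtain ⟨y, hy⟩ := hne
    rw [Finset.mem_filter] at hy
    have : u x0 < u y := (rep_lt hu hr).mp hy.2
    exact mul_pos (abelW_pos u this) (by linarith [hge x0])
  linarith

end Exp

section Cone
variable {ι E : Type*} [Fintype ι] [NormedAddCommGroup E] [NormedSpace ℝ E]
  [FiniteDimensional ℝ E]

/-- Conic Carathéodory: any nonnegative combination can be rewritten using coefficients
supported on a finset on which the vectors are linearly independent. -/
lemma cone_carath (g : ι → E) : ∀ (n : ℕ) (t : ι → ℝ), (∀ i, 0 ≤ t i) →
    (Finset.univ.filter (fun i => t i ≠ 0)).card ≤ n →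
    ∃ s : Finset ι, LinearIndependent ℝ (fun i : {x // x ∈ s} => g ↑i) ∧
      ∃ t' : ι → ℝ, (∀ i, 0 ≤ t' i) ∧ (∀ i, i ∉ s → t' i = 0) ∧
        ∑ i, t' i • g i = ∑ i, t i • g i := by
  intro n
  induction n with
  | zero =>
    intro t ht hcard
    have hzero : ∀ i, t i = 0 := by
      intro i
      by_contra hne
      have : i ∈ Finset.univ.filter (fun i => t i ≠ 0) := by simp [hne]
      have := Finset.card_pos.mpr ⟨i, this⟩
      omega
    refine ⟨∅, ?_, t, ht, fun i _ => hzero i, rfl⟩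
    haveI : IsEmpty {x // x ∈ (∅ : Finset ι)} := by
      constructor; rintro ⟨x, hx⟩; exact absurd hx (Finset.notMem_empty x)
    exact linearIndependent_empty_type
  | succ n ih =>
    intro t ht hcard
    set s0 := Finset.univ.filter (fun i => t i ≠ 0) with hs0
    rcases Nat.lt_or_ge n s0.card with hn | hn
    swap
    · exact ih t ht hn
    by_cases hind : LinearIndependent ℝ (fun i : {x // x ∈ s0} => g ↑i)
    · refine ⟨s0, hind, t, ht, ?_, rfl⟩
      intro i hi
      by_contra hne
      exact hi (by simp [hs0, hne])
    obtain ⟨d, hdsum, i1, hd1⟩ := Fintype.not_linearIndependent_iff.mp hind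
    set D0 : ι → ℝ := fun i => if h : i ∈ s0 then d ⟨i, h⟩ else 0 with hD0
    have hD0sum : ∑ i, D0 i • g i = 0 := by
      have h1 : ∑ i, D0 i • g i = ∑ i ∈ s0, D0 i • g i := by
        refine (Finset.sum_subset (Finset.subset_univ s0) ?_).symm
        intro i _ hi
        rw [hD0]; simp [dif_neg hi]
      rw [h1, ← Finset.sum_coe_sort s0 (fun i => D0 i • g i)]
      rw [← hdsum]
      apply Finset.sum_congr rfl
      rintro ⟨i, hi⟩ _
      rw [hD0]; simp [dif_pos hi]
    have hD0supp : ∀ i, i ∉ s0 → D0 i = 0 := by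
      intro i hi; rw [hD0]; simp [dif_neg hi]
    have hD0ne : D0 (↑i1) ≠ 0 := by
      rw [hD0]; simpa [dif_pos i1.2] using hd1
    -- helper: given a dependence direction with a positive entry, reduce support
    have key : ∀ D : ι → ℝ, (∑ i, D i • g i = 0) → (∀ i, i ∉ s0 → D i = 0) →
        (∃ i, 0 < D i) → ∃ s : Finset ι,
          LinearIndependent ℝ (fun i : {x // x ∈ s} => g ↑i) ∧
          ∃ t' : ι → ℝ, (∀ i, 0 ≤ t' i) ∧ (∀ i, i ∉ s → t' i = 0) ∧
            ∑ i, t' i • g i = ∑ i, t i • g i := by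
      intro D hDsum hDsupp hDpos
      obtain ⟨ip, hip⟩ := hDpos
      have hipF : ip ∈ s0.filter (fun i => 0 < D i) := by
        rw [Finset.mem_filter]
        refine ⟨?_, hip⟩
        by_contra hc
        rw [hDsupp ip hc] at hip
        exact lt_irrefl 0 hip
      obtain ⟨i0, hi0F, hmin⟩ := Finset.exists_min_image (s0.filter (fun i => 0 < D i))
        (fun i => t i / D i) ⟨ip, hipF⟩
      rw [Finset.mem_filter] at hi0F
      set r := t i0 / D i0 with hr
      have hrnn : 0 ≤ r := div_nonneg (ht i0) (le_of_lt hi0F.2)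
      set t' : ι → ℝ := fun i => t i - r * D i with ht'
      have ht'nn : ∀ i, 0 ≤ t' i := by
        intro i
        rw [ht']
        simp only
        rcases le_or_gt (D i) 0 with hDi | hDi
        · nlinarith [ht i]
        · have hiF : i ∈ s0.filter (fun j => 0 < D j) := by
            rw [Finset.mem_filter]
            refine ⟨?_, hDi⟩
            by_contra hc
            rw [hDsupp i hc] at hDi
            exact lt_irrefl 0 hDi
          have h6 := hmin i hiF
          rw [hr, div_le_div_iff₀ hi0F.2 hDi] at h6
          have h7 : r * D i ≤ t i := by
            rw [hr, div_mul_eq_mul_div, div_le_iff₀ hi0F.2]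
            nlinarith
          linarith
      have ht'sum : ∑ i, t' i • g i = ∑ i, t i • g i := by
        have : ∀ i, t' i • g i = t i • g i - (r * D i) • g i := by
          intro i; rw [ht']; simp [sub_smul]
        rw [Finset.sum_congr rfl (fun i _ => this i), Finset.sum_sub_distrib]
        have : ∑ i, (r * D i) • g i = r • ∑ i, D i • g i := by
          rw [Finset.smul_sum]
          apply Finset.sum_congr rfl
          intro i _
          rw [smul_smul]
        rw [this, hDsum, smul_zero, sub_zero]
      have ht'supp : Finset.univ.filter (fun i => t' i ≠ 0) ⊆ s0.erase i0 := by
        intro i hi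
        rw [Finset.mem_filter] at hi
        rw [Finset.mem_erase]
        constructor
        · intro h
          apply hi.2
          have hz : t' i0 = 0 := by
            show t i0 - r * D i0 = 0
            rw [hr, div_mul_cancel₀ _ (ne_of_gt hi0F.2), sub_self]
          rw [h]; exact hz
        · by_contra hc
          apply hi.2
          show t i - r * D i = 0
          rw [hDsupp i hc]
          have hz : t i = 0 := by
            by_contra hne
            exact hc (by simp [hs0, hne])
          rw [hz]; ring
      have hcard' : (Finset.univ.filter (fun i => t' i ≠ 0)).card ≤ n := by
        have h1 := Finset.card_le_card ht'supp
        have h2 : (s0.erase i0).card = s0.card - 1 :=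
          Finset.card_erase_of_mem hi0F.1
        omega
      obtain ⟨s, hs, t'', h1, h2, h3⟩ := ih t' ht'nn hcard'
      exact ⟨s, hs, t'', h1, h2, by rw [h3, ht'sum]⟩
    rcases lt_trichotomy (D0 ↑i1) 0 with hneg | hzero | hpos
    · apply key (fun i => -D0 i)
      · simp only [neg_smul]
        rw [Finset.sum_neg_distrib, hD0sum, neg_zero]
      · intro i hi; rw [hD0supp i hi]; ring
      · exact ⟨↑i1, by linarith⟩
    · exact absurd hzero hD0ne
    · exact key D0 hD0sum hD0supp ⟨↑i1, hpos⟩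


lemma isClosed_fg_cone (g : ι → E) :
    IsClosed {v : E | ∃ t : ι → ℝ, (∀ i, 0 ≤ t i) ∧ v = ∑ i, t i • g i} := by
  have hunion : {v : E | ∃ t : ι → ℝ, (∀ i, 0 ≤ t i) ∧ v = ∑ i, t i • g i} =
      ⋃ s ∈ {s : Finset ι | LinearIndependent ℝ (fun i : {x // x ∈ s} => g ↑i)},
        {v : E | ∃ t : ι → ℝ, (∀ i, 0 ≤ t i) ∧ (∀ i, i ∉ s → t i = 0) ∧
          v = ∑ i, t i • g i} := by
    ext v
    simp only [Set.mem_setOf_eq, Set.mem_iUnion]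
    constructor
    · rintro ⟨t, ht, rfl⟩
      obtain ⟨s, hs, t', h1, h2, h3⟩ := cone_carath g
        (Finset.univ.filter (fun i => t i ≠ 0)).card t ht le_rfl
      exact ⟨s, hs, t', h1, h2, h3.symm⟩
    · rintro ⟨s, _, t, h1, _, h3⟩
      exact ⟨t, h1, h3⟩
  rw [hunion]
  apply Set.Finite.isClosed_biUnion (Set.toFinite _)
  intro s hs
  -- the cone over a linearly independent family is closed
  set φ : ({x // x ∈ s} → ℝ) →ₗ[ℝ] E :=
    { toFun := fun c => ∑ i, c i • g ↑i
      map_add' := by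
        intro c1 c2
        simp only [Pi.add_apply, add_smul, Finset.sum_add_distrib]
      map_smul' := by
        intro a c
        simp only [Pi.smul_apply, smul_eq_mul, RingHom.id_apply, Finset.smul_sum, smul_smul] }
    with hφ
  have hker : LinearMap.ker φ = ⊥ := by
    rw [LinearMap.ker_eq_bot']
    intro c hc
    have := Fintype.linearIndependent_iff.mp hs c hc
    funext i
    exact this i
  have hemb := LinearMap.isClosedEmbedding_of_injective (f := φ) hker
  have himg : {v : E | ∃ t : ι → ℝ, (∀ i, 0 ≤ t i) ∧ (∀ i, i ∉ s → t i = 0) ∧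
      v = ∑ i, t i • g i} = φ '' {c | ∀ i, 0 ≤ c i} := by
    ext v
    simp only [Set.mem_setOf_eq, Set.mem_image]
    constructor
    · rintro ⟨t, h1, h2, rfl⟩
      refine ⟨fun i => t ↑i, fun i => h1 ↑i, ?_⟩
      show ∑ i : {x // x ∈ s}, t ↑i • g ↑i = ∑ i, t i • g i
      rw [Finset.sum_coe_sort s (fun i => t i • g i)]
      exact Finset.sum_subset (Finset.subset_univ s)
        (fun i _ hi => by rw [h2 i hi, zero_smul])
    · rintro ⟨c, hc, rfl⟩
      refine ⟨fun i => if h : i ∈ s then c ⟨i, h⟩ else 0, ?_, ?_, ?_⟩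
      · intro i
        show 0 ≤ if h : i ∈ s then c ⟨i, h⟩ else 0
        split_ifs with h
        · exact hc ⟨i, h⟩
        · exact le_refl 0
      · intro i hi
        show (if h : i ∈ s then c ⟨i, h⟩ else 0) = 0
        rw [dif_neg hi]
      · show φ c = _
        have : ∑ i : ι, (if h : i ∈ s then c ⟨i, h⟩ else 0) • g i
            = ∑ i ∈ s, (if h : i ∈ s then c ⟨i, h⟩ else 0) • g i := by
          refine (Finset.sum_subset (Finset.subset_univ s) ?_).symm
          intro i _ hi
          rw [dif_neg hi, zero_smul]
        rw [this, ← Finset.sum_coe_sort s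
          (fun i => (if h : i ∈ s then c ⟨i, h⟩ else 0) • g i)]
        show φ c = ∑ i : {x // x ∈ s}, (if h : (i:ι) ∈ s then c ⟨i, h⟩ else 0) • g ↑i
        apply Finset.sum_congr rfl
        rintro ⟨i, hi⟩ _
        rw [dif_pos hi]
  rw [himg]
  apply hemb.isClosedMap
  have : {c : {x // x ∈ s} → ℝ | ∀ i, 0 ≤ c i} = ⋂ i, {c | 0 ≤ c i} := by
    ext c; simp
  rw [this]
  exact isClosed_iInter (fun i => isClosed_le continuous_const (continuous_apply i))

end Cone

section Main
variable {X N : Type*} [Fintype X] [Nonempty X] [Fintype N] [Nonempty N]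

variable {pref : N → X → X → Prop}

/-- Every ex-ante efficient lottery is ex-post efficient. -/
lemma exAnte_to_exPost (hpref : ∀ i, IsPrefOrder (pref i)) {p : X → ℝ}
    (hp : IsLottery p) (h : ExAnteEff pref p) : ExPostEff pref p := by
  intro x0 hx0
  by_contra hnpo
  obtain ⟨y0, hy0, j, hj⟩ := not_not.mp hnpo
  have hyx : y0 ≠ x0 := by
    intro he
    exact hj.2 (he ▸ prefRefl (hpref j) x0)
  set q : X → ℝ := fun z => if z = x0 then 0 else if z = y0 then p y0 + p x0 else p z with hqdef
  have hq_eq : ∀ z, q z = p z - (if z = x0 then p x0 else 0) + (if z = y0 then p x0 else 0) := by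
    intro z
    simp only [hqdef]
    by_cases h1 : z = x0
    · subst h1
      rw [if_pos rfl, if_pos rfl, if_neg (fun h => hyx h.symm)]
      ring
    · rw [if_neg h1, if_neg h1]
      by_cases h2 : z = y0
      · rw [if_pos h2, if_pos h2, h2]; ring
      · rw [if_neg h2, if_neg h2]; ring
  have sumS : ∀ S : Finset X, ∑ z ∈ S, q z = (∑ z ∈ S, p z)
      - (if x0 ∈ S then p x0 else 0) + (if y0 ∈ S then p x0 else 0) := by
    intro S
    rw [Finset.sum_congr rfl (fun z _ => hq_eq z), Finset.sum_add_distrib,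
      Finset.sum_sub_distrib, Finset.sum_ite_eq' S x0 (fun _ => p x0),
      Finset.sum_ite_eq' S y0 (fun _ => p x0)]
  apply h
  refine ⟨q, ⟨?_, ?_⟩, ?_, j, ?_, x0, ?_⟩
  · intro z
    simp only [hqdef]
    by_cases h1 : z = x0
    · rw [if_pos h1]
    · rw [if_neg h1]
      by_cases h2 : z = y0
      · rw [if_pos h2]
        have := hp.1 y0; have := hp.1 x0; linarith
      · rw [if_neg h2]; exact hp.1 z
  · rw [show (∑ z, q z) = ∑ z ∈ Finset.univ, q z from rfl, sumS,
      if_pos (Finset.mem_univ x0), if_pos (Finset.mem_univ y0)]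
    have := hp.2
    linarith
  -- weak dominance for every agent
  · intro i x
    unfold upWeight
    rw [sumS]
    by_cases hx0S : strictPref (pref i) x0 x
    · have hy0S : strictPref (pref i) y0 x := by
        constructor
        · exact (hpref i).2 (hy0 i) hx0S.1
        · intro hcon
          exact hx0S.2 ((hpref i).2 hcon (hy0 i))
      rw [if_pos (by simp [hx0S]), if_pos (by simp [hy0S])]
      linarith
    · rw [if_neg (by simp [hx0S])]
      by_cases hy0S : strictPref (pref i) y0 x
      · rw [if_pos (by simp [hy0S])]
        have := hp.1 x0
        linarith
      · rw [if_neg (by simp [hy0S])]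
        linarith
  · intro x
    unfold upWeight
    rw [sumS]
    by_cases hx0S : strictPref (pref j) x0 x
    · have hy0S : strictPref (pref j) y0 x := by
        constructor
        · exact (hpref j).2 (hy0 j) hx0S.1
        · intro hcon
          exact hx0S.2 ((hpref j).2 hcon (hy0 j))
      rw [if_pos (by simp [hx0S]), if_pos (by simp [hy0S])]
      linarith
    · rw [if_neg (by simp [hx0S])]
      by_cases hy0S : strictPref (pref j) y0 x
      · rw [if_pos (by simp [hy0S])]
        have := hp.1 x0
        linarith
      · rw [if_neg (by simp [hy0S])]
        linarith
  · unfold upWeight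
    rw [sumS]
    have hx0n : strictPref (pref j) x0 x0 → False := fun h => h.2 h.1
    rw [if_neg (by simp; intro h; exact absurd h.1 (fun hh => h.2 hh)),
      if_pos (by simp [hj])]
    linarith

/-- Above any outcome there is a Pareto optimal outcome, weakly preferred by everybody,
with at least as large total utility. -/
lemma exists_PO_above (hpref : ∀ i, IsPrefOrder (pref i)) (u : N → X → ℝ)
    (hu : ∀ i, Represents (u i) (pref i)) (x : X) :
    ∃ y, ParetoOptimal pref y ∧ (∀ i, pref i y x) ∧ ∑ i, u i x ≤ ∑ i, u i y := by
  set D := Finset.univ.filter (fun y => ∀ i, pref i y x) with hD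
  have hxD : x ∈ D := by simp [hD, fun i => prefRefl (hpref i) x]
  obtain ⟨y, hyD, hymax⟩ := Finset.exists_max_image D (fun z => ∑ i, u i z) ⟨x, hxD⟩
  rw [hD, Finset.mem_filter] at hyD
  refine ⟨y, ?_, hyD.2, hymax x hxD⟩
  rintro ⟨z, hz, j, hj⟩
  have hzD : z ∈ D := by
    rw [hD, Finset.mem_filter]
    exact ⟨Finset.mem_univ z, fun i => (hpref i).2 (hz i) (hyD.2 i)⟩
  have h1 : ∑ i, u i z ≤ ∑ i, u i y := hymax z hzD
  have h2 : ∑ i, u i y < ∑ i, u i z := by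
    apply Finset.sum_lt_sum
    · intro i _
      exact rep_le (hu i) (hz i)
    · refine ⟨j, Finset.mem_univ j, ?_⟩
      exact (rep_lt (hu j) (hpref j)).mp hj
  linarith

end Main

section Thm
variable {X N : Type*} [Fintype X] [Nonempty X] [Fintype N] [Nonempty N]

lemma upW_sum (r : X → X → Prop) (p : X → ℝ) (x : X) :
    upWeight r p x = ∑ y, p y * (if strictPref r y x then (1:ℝ) else 0) := by
  unfold upWeight
  rw [Finset.sum_filter]
  apply Finset.sum_congr rfl
  intro y _
  split_ifs <;> ring

theorem backward_dir (pref : N → X → X → Prop) (hpref : ∀ i, IsPrefOrder (pref i))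
    (u : N → X → ℝ) (hu : ∀ i, Represents (u i) (pref i)) (c : ℝ)
    (hc : ∀ x, ParetoOptimal pref x → ∑ i, u i x = c) :
    ({p : X → ℝ | IsLottery p ∧ ExAnteEff pref p} =
        {p : X → ℝ | IsLottery p ∧ ExPostEff pref p}) := by
  ext p
  simp only [Set.mem_setOf_eq]
  constructor
  · rintro ⟨hp, hante⟩
    exact ⟨hp, exAnte_to_exPost hpref hp hante⟩
  · rintro ⟨hp, hpost⟩
    refine ⟨hp, ?_⟩
    rintro ⟨q, hq, hge, j, hgt⟩
    have hWle : ∀ x, ∑ i, u i x ≤ c := by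
      intro x
      obtain ⟨y, hyPO, -, hle⟩ := exists_PO_above hpref u hu x
      rw [hc y hyPO] at hle
      exact hle
    have hEp : ∑ x, p x * (∑ i, u i x) = c := by
      have h1 : ∀ x : X, p x * (∑ i, u i x) = p x * c := by
        intro x
        rcases (hp.1 x).lt_or_eq with h | h
        · rw [hc x (hpost x h)]
        · rw [← h]; ring
      rw [Finset.sum_congr rfl (fun x _ => h1 x), ← Finset.sum_mul, hp.2, one_mul]
    have hEq : ∑ x, q x * (∑ i, u i x) ≤ c := by
      calc ∑ x, q x * (∑ i, u i x) ≤ ∑ x, q x * c :=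
            Finset.sum_le_sum (fun x _ => mul_le_mul_of_nonneg_left (hWle x) (hq.1 x))
        _ = c := by rw [← Finset.sum_mul, hq.2, one_mul]
    have hswap : ∀ w : X → ℝ, ∑ x, w x * (∑ i, u i x) = ∑ i, ∑ x, w x * u i x := by
      intro w
      rw [Finset.sum_congr rfl (fun x (_ : x ∈ Finset.univ) => Finset.mul_sum Finset.univ (fun i => u i x) (w x))]
      exact Finset.sum_comm
    have hlt : ∑ x, p x * (∑ i, u i x) < ∑ x, q x * (∑ i, u i x) := by
      rw [hswap p, hswap q]
      apply Finset.sum_lt_sum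
      · intro i _
        exact exp_le_of_SDge (hu i) (hpref i) hp.2 hq.2 (hge i)
      · exact ⟨j, Finset.mem_univ j, exp_lt_of_SDgt (hu j) (hpref j) hp hq hgt⟩
    linarith


theorem forward_dir (pref : N → X → X → Prop) (hpref : ∀ i, IsPrefOrder (pref i))
    (hset : {p : X → ℝ | IsLottery p ∧ ExAnteEff pref p} =
        {p : X → ℝ | IsLottery p ∧ ExPostEff pref p}) :
    ∃ u : N → X → ℝ, (∀ i, Represents (u i) (pref i)) ∧
      ∃ c : ℝ, ∀ x, ParetoOptimal pref x → ∑ i, u i x = c := by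
  classical
  -- a canonical representation, used to find a Pareto optimal outcome
  choose u0 hu0 using fun i => exists_rep (X := X) (hpref i)
  obtain ⟨y0, hy0PO, -, -⟩ := exists_PO_above hpref u0 hu0 (Classical.arbitrary X)
  set PO := Finset.univ.filter (fun x => ParetoOptimal pref x) with hPOdef
  have hPOne : PO.Nonempty := ⟨y0, by simp [hPOdef, hy0PO]⟩
  have hcard : (0:ℝ) < (PO.card : ℝ) := by exact_mod_cast Finset.card_pos.mpr hPOne
  set pstar : X → ℝ := fun x => if ParetoOptimal pref x then ((PO.card : ℝ))⁻¹ else 0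
    with hpsdef
  have hpslot : IsLottery pstar := by
    constructor
    · intro x
      simp only [hpsdef]
      split_ifs
      · positivity
      · exact le_refl 0
    · simp only [hpsdef]
      rw [← Finset.sum_filter, ← hPOdef, Finset.sum_const, nsmul_eq_mul,
        mul_inv_cancel₀ (ne_of_gt hcard)]
  have hpspost : ExPostEff pref pstar := by
    intro x hx
    by_contra hn
    simp only [hpsdef, if_neg hn] at hx
    exact lt_irrefl 0 hx
  have hante : ExAnteEff pref pstar := by
    have hmem : pstar ∈ {p : X → ℝ | IsLottery p ∧ ExPostEff pref p} := ⟨hpslot, hpspost⟩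
    rw [← hset] at hmem
    exact hmem.2
  -- the geometric setup
  set a : X → (N × X) → ℝ := fun y k => if strictPref (pref k.1) y k.2 then 1 else 0 with ha
  set ap : (N × X) → ℝ := fun k => upWeight (pref k.1) pstar k.2 with hap
  set b : X → (N × X) → ℝ := fun y => a y - ap with hb
  set g : (X ⊕ (N × X)) → ((N × X) → ℝ) :=
    Sum.elim b (fun k => -(Pi.single k (1:ℝ))) with hg
  set M := {v : (N × X) → ℝ | ∃ t : (X ⊕ (N × X)) → ℝ, (∀ i, 0 ≤ t i) ∧
    v = ∑ i, t i • g i} with hM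
  have hMclosed : IsClosed M := isClosed_fg_cone g
  have hMconv : Convex ℝ M := by
    rintro v1 ⟨t1, ht1, rfl⟩ v2 ⟨t2, ht2, rfl⟩ α β hα hβ hαβ
    refine ⟨fun i => α * t1 i + β * t2 i,
      fun i => add_nonneg (mul_nonneg hα (ht1 i)) (mul_nonneg hβ (ht2 i)), ?_⟩
    rw [Finset.smul_sum, Finset.smul_sum, ← Finset.sum_add_distrib]
    apply Finset.sum_congr rfl
    intro i _
    dsimp only
    module
  have hMsmul : ∀ (cc : ℝ), 0 ≤ cc → ∀ v ∈ M, cc • v ∈ M := by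
    rintro cc hcc v ⟨t, ht, rfl⟩
    refine ⟨fun i => cc * t i, fun i => mul_nonneg hcc (ht i), ?_⟩
    rw [Finset.smul_sum]
    apply Finset.sum_congr rfl
    intro i _
    rw [mul_smul]
  have h0M : (0 : (N × X) → ℝ) ∈ M :=
    ⟨0, fun i => le_refl 0, by simp⟩
  have hb_mem : ∀ y, b y ∈ M := by
    intro y
    refine ⟨fun i => if i = Sum.inl y then 1 else 0, fun i => by dsimp only; split_ifs <;> norm_num, ?_⟩
    have h1 : ∀ i : X ⊕ (N × X), (if i = Sum.inl y then (1:ℝ) else 0) • g i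
        = if i = Sum.inl y then g i else 0 := by
      intro i; split_ifs <;> simp
    rw [Finset.sum_congr rfl (fun i _ => h1 i), Finset.sum_ite_eq' Finset.univ (Sum.inl y) g,
      if_pos (Finset.mem_univ _)]
    rw [hg]
    rfl
  -- coordinate computation for members of M
  have hvk : ∀ (t : (X ⊕ (N × X)) → ℝ) (k : N × X),
      (∑ i, t i • g i) k = (∑ y, t (Sum.inl y) * a y k)
        - (∑ y, t (Sum.inl y)) * ap k - t (Sum.inr k) := by
    intro t k
    rw [Finset.sum_apply]
    simp only [Pi.smul_apply, smul_eq_mul]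
    rw [Fintype.sum_sum_type]
    have h1 : ∀ y : X, t (Sum.inl y) * g (Sum.inl y) k
        = t (Sum.inl y) * a y k - t (Sum.inl y) * ap k := by
      intro y
      rw [hg]
      simp only [Sum.elim_inl, hb, Pi.sub_apply]
      ring
    have h2 : ∀ k' : N × X, t (Sum.inr k') * g (Sum.inr k') k
        = -(if k = k' then t (Sum.inr k') else 0) := by
      intro k'
      rw [hg]
      simp only [Sum.elim_inr, Pi.neg_apply, Pi.single_apply]
      split_ifs <;> ring
    rw [Finset.sum_congr rfl (fun y _ => h1 y), Finset.sum_congr rfl (fun k' _ => h2 k'),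
      Finset.sum_sub_distrib, Finset.sum_neg_distrib, Finset.sum_ite_eq Finset.univ k
        (fun k' => t (Sum.inr k')), if_pos (Finset.mem_univ k), ← Finset.sum_mul]
    ring
  -- disjointness from the standard simplex
  have hdisj : Disjoint M (stdSimplex ℝ (N × X)) := by
    rw [Set.disjoint_left]
    rintro v ⟨t, ht, hv⟩ hvS
    obtain ⟨hv0, hv1⟩ := hvS
    have hvk' : ∀ k : N × X, v k = (∑ y, t (Sum.inl y) * a y k)
        - (∑ y, t (Sum.inl y)) * ap k - t (Sum.inr k) := by
      intro k; rw [hv]; exact hvk t k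
    set T := ∑ y, t (Sum.inl y) with hT
    have hTnn : 0 ≤ T := Finset.sum_nonneg (fun y _ => ht _)
    rcases eq_or_lt_of_le hTnn with hT0 | hTpos
    · -- T = 0 : contradiction with total mass one
      have hs0 : ∑ y, t (Sum.inl y) = 0 := by rw [← hT]; exact hT0.symm
      have hty : ∀ y, t (Sum.inl y) = 0 := by
        intro y
        exact (Finset.sum_eq_zero_iff_of_nonneg (fun y _ => ht (Sum.inl y))).mp hs0 y
          (Finset.mem_univ y)
      have hvle : ∀ k : N × X, v k ≤ 0 := by
        intro k
        rw [hvk' k, ← hT0]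
        have h8 : ∑ y, t (Sum.inl y) * a y k = 0 :=
          Finset.sum_eq_zero (fun y _ => by rw [hty y, zero_mul])
        rw [h8]
        have := ht (Sum.inr k)
        linarith
      have : (1:ℝ) ≤ 0 := by
        rw [← hv1]
        exact Finset.sum_nonpos (fun k _ => hvle k)
      linarith
    · -- T > 0 : construct a dominating lottery
      set q : X → ℝ := fun y => t (Sum.inl y) / T with hq
      have hup : ∀ k : N × X, upWeight (pref k.1) q k.2
          = ap k + (v k + t (Sum.inr k)) / T := by
        intro k
        rw [upW_sum]
        have h3 : ∀ y : X, q y * (if strictPref (pref k.1) y k.2 then (1:ℝ) else 0)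
            = (t (Sum.inl y) * a y k) / T := by
          intro y
          show (t (Sum.inl y) / T) * (if strictPref (pref k.1) y k.2 then (1:ℝ) else 0)
              = (t (Sum.inl y) * a y k) / T
          have h9 : a y k = (if strictPref (pref k.1) y k.2 then (1:ℝ) else 0) := rfl
          rw [← h9, div_mul_eq_mul_div]
        rw [Finset.sum_congr rfl (fun y _ => h3 y), ← Finset.sum_div]
        have h4 : ∑ y, t (Sum.inl y) * a y k = v k + T * ap k + t (Sum.inr k) := by
          rw [hvk' k]
          ring
        rw [h4]
        field_simp
        ring
      apply hante
      have hsdge : ∀ i, SDge (pref i) q pstar := by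
        intro i x
        have h5 := hup (i, x)
        have h6 : 0 ≤ (v (i,x) + t (Sum.inr (i,x))) / T :=
          div_nonneg (add_nonneg (hv0 (i,x)) (ht _)) hTnn
        have h7 : upWeight (pref i) pstar x = ap (i, x) := rfl
        rw [h5, h7]
        linarith
      obtain ⟨k0, hk0⟩ : ∃ k, 0 < v k := by
        by_contra hc
        push_neg at hc
        have : (1:ℝ) ≤ 0 := by
          rw [← hv1]
          exact Finset.sum_nonpos (fun k _ => hc k)
        linarith
      refine ⟨q, ⟨fun y => div_nonneg (ht _) hTnn, ?_⟩, hsdge, k0.1, hsdge k0.1, k0.2, ?_⟩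
      · calc ∑ y, q y = ∑ y, t (Sum.inl y) / T := Finset.sum_congr rfl (fun y _ => rfl)
          _ = (∑ y, t (Sum.inl y)) / T := by rw [← Finset.sum_div]
          _ = 1 := by rw [← hT]; exact div_self (ne_of_gt hTpos)
      · have h5 := hup k0
        have h6 : 0 < (v k0 + t (Sum.inr k0)) / T :=
          div_pos (add_pos_of_pos_of_nonneg hk0 (ht _)) hTpos
        have h7 : upWeight (pref k0.1) pstar k0.2 = ap k0 := rfl
        rw [h5, h7]
        linarith
  -- separation
  obtain ⟨f, α, β, hfM, hαβ, hfS⟩ := geometric_hahn_banach_closed_compact hMconv hMclosed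
    (convex_stdSimplex ℝ (N × X)) (isCompact_stdSimplex ℝ (N × X)) hdisj
  have hα : 0 < α := by
    have := hfM 0 h0M
    rwa [map_zero] at this
  have hfM0 : ∀ v ∈ M, f v ≤ 0 := by
    intro v hv
    by_contra hcon
    push_neg at hcon
    have hsc := hfM _ (hMsmul (α / f v) (div_nonneg hα.le hcon.le) v hv)
    rw [map_smul, smul_eq_mul, div_mul_cancel₀ _ (ne_of_gt hcon)] at hsc
    exact lt_irrefl α hsc
  set lam : (N × X) → ℝ := fun k => f (Pi.single k 1) with hlam
  have hlampos : ∀ k, 0 < lam k := by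
    intro k
    have hmem : Pi.single k (1:ℝ) ∈ stdSimplex ℝ (N × X) := by
      constructor
      · intro j
        rw [Pi.single_apply]
        split_ifs <;> norm_num
      · simp [Pi.single_apply]
    have := hfS _ hmem
    have h7 : lam k = f (Pi.single k 1) := rfl
    rw [h7]
    linarith
  have hexpand : ∀ w : (N × X) → ℝ, f w = ∑ k, w k * lam k := by
    intro w
    conv_lhs => rw [← Finset.univ_sum_single w]
    rw [map_sum]
    apply Finset.sum_congr rfl
    intro k _
    have h8 : Pi.single k (w k) = w k • (Pi.single k (1:ℝ) : (N × X) → ℝ) := by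
      funext j
      rw [Pi.smul_apply, Pi.single_apply, Pi.single_apply, smul_eq_mul]
      split_ifs <;> ring
    rw [h8, map_smul, smul_eq_mul]
  -- the utility functions
  set u : N → X → ℝ := fun i y => ∑ x, (if strictPref (pref i) y x then lam (i, x) else 0)
    with hu
  have huy : ∀ (i : N) (y : X),
      u i y = ∑ x ∈ Finset.univ.filter (fun x => strictPref (pref i) y x), lam (i, x) := by
    intro i y
    rw [Finset.sum_filter]
  have hWeq : ∀ y, ∑ i, u i y = ∑ k : N × X, a y k * lam k := by
    intro y
    rw [Fintype.sum_prod_type]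
    apply Finset.sum_congr rfl
    intro i _
    show ∑ x, (if strictPref (pref i) y x then lam (i, x) else 0) = _
    apply Finset.sum_congr rfl
    intro x _
    have h9 : a y (i, x) = (if strictPref (pref i) y x then (1:ℝ) else 0) := rfl
    rw [h9, ite_mul, one_mul, zero_mul]
  have hWle : ∀ y, ∑ k : N × X, a y k * lam k ≤ ∑ k : N × X, ap k * lam k := by
    intro y
    have h1 := hfM0 (b y) (hb_mem y)
    rw [hexpand] at h1
    have h2 : ∑ k, b y k * lam k = ∑ k, a y k * lam k - ∑ k, ap k * lam k := by
      rw [← Finset.sum_sub_distrib]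
      apply Finset.sum_congr rfl
      intro k _
      have h9 : b y k = a y k - ap k := rfl
      rw [h9]
      ring
    linarith
  -- u i represents pref i
  have hrep : ∀ i, Represents (u i) (pref i) := by
    intro i
    have mono : ∀ {z' y'}, pref i z' y' → u i y' ≤ u i z' := by
      intro z' y' h
      rw [huy, huy]
      apply Finset.sum_le_sum_of_subset_of_nonneg
      · intro x hx
        rw [Finset.mem_filter] at hx ⊢
        refine ⟨Finset.mem_univ x, ?_⟩
        constructor
        · exact (hpref i).2 h hx.2.1
        · intro hcon
          exact hx.2.2 ((hpref i).2 hcon h)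
      · intro x _ _
        exact (hlampos (i, x)).le
    have smono : ∀ {z' y'}, strictPref (pref i) z' y' → u i y' < u i z' := by
      intro z' y' h
      rw [huy, huy]
      apply Finset.sum_lt_sum_of_subset
      · intro x hx
        rw [Finset.mem_filter] at hx ⊢
        refine ⟨Finset.mem_univ x, ?_⟩
        constructor
        · exact (hpref i).2 h.1 hx.2.1
        · intro hcon
          exact hx.2.2 ((hpref i).2 hcon h.1)
      · show y' ∈ Finset.univ.filter (fun x => strictPref (pref i) z' x)
        rw [Finset.mem_filter]
        exact ⟨Finset.mem_univ y', h⟩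
      · show y' ∉ Finset.univ.filter (fun x => strictPref (pref i) y' x)
        rw [Finset.mem_filter]
        rintro ⟨-, hcon⟩
        exact hcon.2 hcon.1
      · exact hlampos (i, y')
      · intro x _ _
        exact (hlampos (i, x)).le
    intro z y
    constructor
    · intro hle
      by_contra hcon
      have := smono ((strictPref_iff_not (hpref i)).mpr hcon)
      linarith
    · exact mono
  -- the welfare is constant on the Pareto optimal set
  have hCeq : ∑ k : N × X, ap k * lam k = ∑ y, pstar y * (∑ k : N × X, a y k * lam k) := by
    have h1 : ∀ k : N × X, ap k = ∑ y, pstar y * a y k := by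
      intro k
      have h9 : ap k = upWeight (pref k.1) pstar k.2 := rfl
      rw [h9, upW_sum]
    calc ∑ k : N × X, ap k * lam k = ∑ k : N × X, ∑ y, pstar y * a y k * lam k := by
          apply Finset.sum_congr rfl
          intro k _
          rw [h1 k, Finset.sum_mul]
      _ = ∑ y, ∑ k : N × X, pstar y * a y k * lam k := Finset.sum_comm
      _ = ∑ y, pstar y * (∑ k : N × X, a y k * lam k) := by
          apply Finset.sum_congr rfl
          intro y _
          rw [Finset.mul_sum]
          apply Finset.sum_congr rfl
          intro k _
          ring
  have hzero : ∑ y, pstar y * ((∑ k : N × X, ap k * lam k) - ∑ k : N × X, a y k * lam k)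
      = 0 := by
    have h1 : ∀ y : X, pstar y * ((∑ k : N × X, ap k * lam k) - ∑ k : N × X, a y k * lam k)
        = pstar y * (∑ k : N × X, ap k * lam k) - pstar y * (∑ k : N × X, a y k * lam k) := by
      intro y; ring
    rw [Finset.sum_congr rfl (fun y _ => h1 y), Finset.sum_sub_distrib, ← Finset.sum_mul,
      hpslot.2, one_mul, ← hCeq, sub_self]
  refine ⟨u, hrep, ∑ k : N × X, ap k * lam k, ?_⟩
  intro x hxPO
  have h1 := (Finset.sum_eq_zero_iff_of_nonneg (fun y _ =>
    mul_nonneg (hpslot.1 y) (sub_nonneg.mpr (hWle y)))).mp hzero x (Finset.mem_univ x)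
  have hpx : 0 < pstar x := by
    have h9 : pstar x = ((PO.card : ℝ))⁻¹ := by
      show (if ParetoOptimal pref x then ((PO.card : ℝ))⁻¹ else 0) = _
      rw [if_pos hxPO]
    rw [h9]
    exact inv_pos.mpr hcard
  rcases mul_eq_zero.mp h1 with h2 | h2
  · exact absurd h2 (ne_of_gt hpx)
  · rw [hWeq x]
    linarith

end Thm

/-- Ex-ante efficiency coincides with ex-post efficiency iff there is a
utilitarian representation under which all Pareto optimal outcomes have the same welfare. -/
theorem stmt_6 {X N : Type*} [Fintype X] [Nonempty X] [Fintype N] [Nonempty N]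
    (pref : N → X → X → Prop) (hpref : ∀ i, IsPrefOrder (pref i)) :
    ({p : X → ℝ | IsLottery p ∧ ExAnteEff pref p} =
        {p : X → ℝ | IsLottery p ∧ ExPostEff pref p}) ↔
      ∃ u : N → X → ℝ, (∀ i, Represents (u i) (pref i)) ∧
        ∃ c : ℝ, ∀ x, ParetoOptimal pref x → ∑ i, u i x = c := by
  constructor
  · exact forward_dir pref hpref
  · rintro ⟨u, hu, c, hc⟩
    exact backward_dir pref hpref u hu c hc
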